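/- Let n, m₁, m₂ be positive integers with m₁ + m₂ ≤ n. Let H denote the probability that two independent uniformly random subsets of {1,…,n} of sizes m₁ and m₂ intersect in exactly j elements (hypergeometric), and let e = m₁m₂/n. Then the total variation distance between the hypergeometric distribution of the intersection size and the Poisson distribution with mean e is at most (1 − e^{−e})·(n/(n−1))·(m₁/n + m₂/n − m₁m₂/n² − 1/n), which is in turn at most (m₁ + m₂)/n. -/

import Mathlib

open Real Finset

lemma exp_tsum (x : ℝ) : Real.exp x = ∑' n : ℕ, x ^ n / n.factorial := by
  rw [Real.exp_eq_exp_ℝ, NormedSpace.exp_eq_tsum_div]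

noncomputable def stS (lam : ℝ) (k : ℕ) : ℝ := ∑ i ∈ range (k+1), lam ^ i / i.factorial
noncomputable def stT (lam : ℝ) (k : ℕ) : ℝ := ∑' i : ℕ, lam ^ (i+(k+1)) / (i+(k+1)).factorial

lemma summable_shift (lam : ℝ) (k : ℕ) :
    Summable (fun i : ℕ => lam ^ (i+k) / (i+k).factorial) :=
  (summable_nat_add_iff k).2 (Real.summable_pow_div_factorial lam)

lemma stT_eq (lam : ℝ) (k : ℕ) : stT lam k = Real.exp lam - stS lam k := by
  have h := Summable.sum_add_tsum_nat_add (f := fun n : ℕ => lam ^ n / n.factorial) (k+1)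
    (Real.summable_pow_div_factorial lam)
  rw [exp_tsum lam, stT, stS]
  linarith [h]

lemma stT_nonneg {lam : ℝ} (hlam : 0 ≤ lam) (k : ℕ) : 0 ≤ stT lam k :=
  tsum_nonneg fun i => by positivity

lemma stS_nonneg {lam : ℝ} (hlam : 0 ≤ lam) (k : ℕ) : 0 ≤ stS lam k :=
  Finset.sum_nonneg fun i _ => by positivity

lemma stS_key {lam : ℝ} (hlam : 0 < lam) (u : ℕ) :
    lam * stS lam u ≤ ((u:ℝ)+1) * (stS lam (u+1) - 1) := by
  have h1 : lam * stS lam u = ∑ i ∈ range (u+1), lam ^ (i+1) / i.factorial := by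
    rw [stS, Finset.mul_sum]
    exact Finset.sum_congr rfl fun i _ => by rw [pow_succ]; ring
  have h2 : ((u:ℝ)+1) * (stS lam (u+1) - 1)
      = ∑ i ∈ range (u+1), ((u:ℝ)+1) * (lam ^ (i+1) / (i+1).factorial) := by
    rw [stS, Finset.sum_range_succ' (fun i => lam ^ i / (i.factorial : ℝ)) (u+1)]
    norm_num [Finset.mul_sum]
  rw [h1, h2]
  refine Finset.sum_le_sum fun i hi => ?_
  rw [Finset.mem_range] at hi
  have hiu : (i:ℝ) + 1 ≤ (u:ℝ) + 1 := by exact_mod_cast by omega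
  have hf : (0:ℝ) < (i.factorial : ℝ) := by positivity
  have hx : (0:ℝ) ≤ lam ^ (i+1) := by positivity
  rw [Nat.factorial_succ, Nat.cast_mul, mul_div_assoc', div_le_div_iff₀ hf (by positivity)]
  push_cast
  nlinarith [mul_le_mul_of_nonneg_right hiu (mul_nonneg hx hf.le)]

lemma stB_key {lam : ℝ} (hlam : 0 < lam) (u : ℕ) :
    ((u:ℝ)+1) * stT lam (u+1) ≤ lam * stT lam u := by
  rw [stT, stT, ← tsum_mul_left, ← tsum_mul_left]
  refine Summable.tsum_le_tsum ?_ ((summable_shift lam (u+2)).mul_left _)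
    ((summable_shift lam (u+1)).mul_left _)
  intro i
  have h2 : i + (u+1+1) = (i+(u+1)) + 1 := by omega
  rw [h2, show lam * (lam ^ (i+(u+1)) / ((i+(u+1)).factorial : ℝ))
      = lam ^ ((i+(u+1))+1) / ((i+(u+1)).factorial : ℝ) by rw [pow_succ]; ring]
  set m := i + (u+1) with hm
  have hf : (0:ℝ) < (m.factorial : ℝ) := by positivity
  have hx : (0:ℝ) ≤ lam ^ (m+1) := by positivity
  have hiu : (u:ℝ)+1 ≤ (m:ℝ)+1 := by
    have : u ≤ m := by omega
    exact_mod_cast by omega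
  rw [Nat.factorial_succ, Nat.cast_mul, mul_div_assoc', div_le_div_iff₀ (by positivity) hf]
  push_cast
  nlinarith [mul_le_mul_of_nonneg_right hiu (mul_nonneg hx hf.le)]

lemma stA_mono {lam : ℝ} (hlam : 0 < lam) (u : ℕ) :
    (u.factorial : ℝ)/lam^(u+1) * stS lam u ≤ ((u+1).factorial : ℝ)/lam^(u+2) * stS lam (u+1) := by
  have key : lam * stS lam u ≤ ((u:ℝ)+1) * stS lam (u+1) := by
    have h0 : ((u:ℝ)+1) * (stS lam (u+1) - 1) ≤ ((u:ℝ)+1) * stS lam (u+1) := by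
      have : (0:ℝ) ≤ (u:ℝ)+1 := by positivity
      nlinarith
    linarith [stS_key hlam u]
  rw [div_mul_eq_mul_div, div_mul_eq_mul_div, div_le_div_iff₀ (by positivity) (by positivity)]
  calc (u.factorial : ℝ) * stS lam u * lam ^ (u+2)
      = (u.factorial : ℝ) * lam^(u+1) * (lam * stS lam u) := by ring
    _ ≤ (u.factorial : ℝ) * lam^(u+1) * (((u:ℝ)+1) * stS lam (u+1)) :=
        mul_le_mul_of_nonneg_left key (by positivity)
    _ = ((u+1).factorial : ℝ) * stS lam (u+1) * lam ^ (u+1) := by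
        rw [Nat.factorial_succ, Nat.cast_mul]; push_cast; ring

lemma stB_anti {lam : ℝ} (hlam : 0 < lam) (u : ℕ) :
    ((u+1).factorial : ℝ)/lam^(u+2) * stT lam (u+1) ≤ (u.factorial : ℝ)/lam^(u+1) * stT lam u := by
  rw [div_mul_eq_mul_div, div_mul_eq_mul_div, div_le_div_iff₀ (by positivity) (by positivity)]
  calc ((u+1).factorial : ℝ) * stT lam (u+1) * lam ^ (u+1)
      = (u.factorial : ℝ) * lam^(u+1) * (((u:ℝ)+1) * stT lam (u+1)) := by
        rw [Nat.factorial_succ, Nat.cast_mul]; push_cast; ring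
    _ ≤ (u.factorial : ℝ) * lam^(u+1) * (lam * stT lam u) :=
        mul_le_mul_of_nonneg_left (stB_key hlam u) (by positivity)
    _ = (u.factorial : ℝ) * stT lam u * lam ^ (u+2) := by ring

lemma st_diag {lam : ℝ} (hlam : 0 < lam) (u : ℕ) :
    lam^(u+1)/((u+1).factorial : ℝ) *
      (((u+1).factorial : ℝ)/lam^(u+2) * stT lam (u+1) + (u.factorial : ℝ)/lam^(u+1) * stS lam u)
      ≤ (Real.exp lam - 1)/lam := by
  have hfu : (0:ℝ) < ((u+1).factorial : ℝ) := by positivity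
  have hfu' : (0:ℝ) < (u.factorial : ℝ) := by positivity
  have e1 : lam^(u+1)/((u+1).factorial : ℝ) * (((u+1).factorial : ℝ)/lam^(u+2) * stT lam (u+1))
      = stT lam (u+1) / lam := by
    rw [pow_succ]; field_simp; ring
  have e2 : lam^(u+1)/((u+1).factorial : ℝ) * ((u.factorial : ℝ)/lam^(u+1) * stS lam u)
      = stS lam u / ((u:ℝ)+1) := by
    rw [Nat.factorial_succ, Nat.cast_mul]
    field_simp
    push_cast
    ring
  rw [mul_add, e1, e2]
  have hT0 : Real.exp lam - 1 = stT lam 0 := by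
    rw [stT_eq]; simp [stS]
  have hdiff : stT lam 0 - stT lam (u+1) = stS lam (u+1) - 1 := by
    rw [stT_eq, stT_eq]; simp [stS]
  have h3 : lam * stS lam u ≤ ((u:ℝ)+1) * (stT lam 0 - stT lam (u+1)) := by
    rw [hdiff]; exact stS_key hlam u
  have h4 : stS lam u / ((u:ℝ)+1) ≤ (stT lam 0 - stT lam (u+1))/lam := by
    rw [div_le_div_iff₀ (by positivity) hlam]
    nlinarith
  rw [hT0]
  have : stT lam (u+1)/lam + (stT lam 0 - stT lam (u+1))/lam = stT lam 0 / lam := by ring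
  linarith

noncomputable def stGam (lam : ℝ) (j k : ℕ) : ℝ :=
  ((k.factorial : ℝ) / lam^(k+1)) *
    ((if j ≤ k then lam^j / (j.factorial : ℝ) else 0)
      - lam^j / (j.factorial : ℝ) * Real.exp (-lam) * stS lam k)

lemma stGam_of_lt {lam : ℝ} {j k : ℕ} (hjk : k < j) :
    stGam lam j k = -(lam^j/(j.factorial : ℝ) * Real.exp (-lam))
      * ((k.factorial : ℝ)/lam^(k+1) * stS lam k) := by
  rw [stGam, if_neg (by omega)]
  ring

lemma stGam_of_le {lam : ℝ} (hlam : 0 < lam) {j k : ℕ} (hjk : j ≤ k) :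
    stGam lam j k = (lam^j/(j.factorial : ℝ) * Real.exp (-lam))
      * ((k.factorial : ℝ)/lam^(k+1) * stT lam k) := by
  rw [stGam, if_pos hjk, stT_eq]
  rw [Real.exp_neg]
  have h1 : Real.exp lam ≠ 0 := Real.exp_ne_zero lam
  field_simp

lemma stGam_diff_nonpos {lam : ℝ} (hlam : 0 < lam) {j u : ℕ} (hj : j ≠ u+1) :
    stGam lam j (u+1) - stGam lam j u ≤ 0 := by
  have hcoef : (0:ℝ) ≤ lam^j/(j.factorial : ℝ) * Real.exp (-lam) := by positivity
  rcases le_or_gt j u with hju | hju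
  · rw [stGam_of_le hlam (by omega), stGam_of_le hlam hju]
    have := stB_anti hlam u
    nlinarith
  · have hju2 : u + 1 < j := by omega
    rw [stGam_of_lt hju2, stGam_of_lt (by omega)]
    have := stA_mono hlam u
    nlinarith

lemma stGam_diff_diag {lam : ℝ} (hlam : 0 < lam) (u : ℕ) :
    stGam lam (u+1) (u+1) - stGam lam (u+1) u ≤ (1 - Real.exp (-lam))/lam := by
  rw [stGam_of_le hlam le_rfl, stGam_of_lt (by omega)]
  have h := st_diag hlam u
  have hexp : (0:ℝ) < Real.exp (-lam) := Real.exp_pos _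
  have key : lam^(u+1)/((u+1).factorial : ℝ) * Real.exp (-lam) *
      (((u+1).factorial : ℝ)/lam^(u+2) * stT lam (u+1) + (u.factorial : ℝ)/lam^(u+1) * stS lam u)
      ≤ Real.exp (-lam) * ((Real.exp lam - 1)/lam) := by
    calc lam^(u+1)/((u+1).factorial : ℝ) * Real.exp (-lam) * (_ + _)
        = Real.exp (-lam) * (lam^(u+1)/((u+1).factorial : ℝ) * (((u+1).factorial : ℝ)/lam^(u+2)
            * stT lam (u+1) + (u.factorial : ℝ)/lam^(u+1) * stS lam u)) := by ring
      _ ≤ Real.exp (-lam) * ((Real.exp lam - 1)/lam) := mul_le_mul_of_nonneg_left h hexp.le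
  have hre : Real.exp (-lam) * ((Real.exp lam - 1)/lam) = (1 - Real.exp (-lam))/lam := by
    rw [Real.exp_neg]
    field_simp
  nlinarith [key, hre]

noncomputable def stg (lam P : ℝ) (c : ℕ → ℝ) (k : ℕ) : ℝ :=
  ((k.factorial : ℝ)/lam^(k+1)) * ∑ i ∈ range (k+1), (lam^i / (i.factorial : ℝ)) * (c i - P)

lemma stg_eq_sum {lam : ℝ} (hlam : 0 < lam) {c : ℕ → ℝ} {M : ℕ}
    (hc0 : ∀ j, M ≤ j → c j = 0) (k : ℕ) :
    stg lam (∑ j ∈ range M, c j * (Real.exp (-lam) * lam^j/(j.factorial : ℝ))) c k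
      = ∑ j ∈ range M, c j * stGam lam j k := by
  set P : ℝ := ∑ j ∈ range M, c j * (Real.exp (-lam) * lam^j/(j.factorial : ℝ)) with hP
  set f : ℕ → ℝ := fun i => c i * (if i ≤ k then lam^i / (i.factorial : ℝ) else 0) with hf
  have key : ∑ i ∈ range (k+1), (lam^i / (i.factorial : ℝ)) * c i = ∑ j ∈ range M, f j := by
    have e1 : ∑ i ∈ range (k+1), (lam^i / (i.factorial : ℝ)) * c i
        = ∑ i ∈ range (k+1), f i := by
      refine Finset.sum_congr rfl fun i hi => ?_
      rw [Finset.mem_range] at hi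
      rw [hf]
      simp only []
      rw [if_pos (by omega)]
      ring
    have e2 : ∑ i ∈ range (k+1), f i = ∑ i ∈ range (max (k+1) M), f i := by
      refine Finset.sum_subset (Finset.range_subset_range.2 (le_max_left (k+1) M)) ?_
      intro i _ hi
      rw [Finset.mem_range, not_lt] at hi
      rw [hf]; simp only []
      rw [if_neg (by omega), mul_zero]
    have e3 : ∑ j ∈ range M, f j = ∑ j ∈ range (max (k+1) M), f j := by
      refine Finset.sum_subset (Finset.range_subset_range.2 (le_max_right (k+1) M)) ?_
      intro j _ hj
      rw [Finset.mem_range, not_lt] at hj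
      rw [hf]; simp only []
      rw [hc0 j hj, zero_mul]
    rw [e1, e2, e3]
  have expand : stg lam P c k = ((k.factorial : ℝ)/lam^(k+1)) *
      ((∑ i ∈ range (k+1), (lam^i / (i.factorial : ℝ)) * c i) - P * stS lam k) := by
    rw [stg, stS]
    congr 1
    rw [Finset.mul_sum, ← Finset.sum_sub_distrib]
    exact Finset.sum_congr rfl fun i _ => by ring
  rw [expand, key, hP, Finset.sum_mul, ← Finset.sum_sub_distrib, Finset.mul_sum]
  refine Finset.sum_congr rfl fun j _ => ?_
  rw [hf, stGam]
  simp only []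
  ring

lemma stg_diff_le {lam : ℝ} (hlam : 0 < lam) {c : ℕ → ℝ} {M : ℕ}
    (hc0 : ∀ j, M ≤ j → c j = 0) (hc01 : ∀ j, 0 ≤ c j ∧ c j ≤ 1) (u : ℕ) :
    stg lam (∑ j ∈ range M, c j * (Real.exp (-lam) * lam^j/(j.factorial : ℝ))) c (u+1)
      - stg lam (∑ j ∈ range M, c j * (Real.exp (-lam) * lam^j/(j.factorial : ℝ))) c u
      ≤ (1 - Real.exp (-lam))/lam := by
  have hbd : (0:ℝ) ≤ (1 - Real.exp (-lam))/lam := by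
    have : Real.exp (-lam) ≤ 1 := Real.exp_le_one_iff.2 (by linarith)
    exact div_nonneg (by linarith) hlam.le
  rw [stg_eq_sum hlam hc0, stg_eq_sum hlam hc0, ← Finset.sum_sub_distrib]
  calc ∑ j ∈ range M, (c j * stGam lam j (u+1) - c j * stGam lam j u)
      ≤ ∑ j ∈ range M, (if j = u+1 then (1 - Real.exp (-lam))/lam else 0) := by
        refine Finset.sum_le_sum fun j _ => ?_
        rcases eq_or_ne j (u+1) with rfl | hj
        · rw [if_pos rfl]
          have h1 := stGam_diff_diag hlam u
          have h2 := (hc01 (u+1)).1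
          have h3 := (hc01 (u+1)).2
          nlinarith [h1, h2, h3, hbd]
        · rw [if_neg hj]
          have h1 := stGam_diff_nonpos hlam hj
          have h2 := (hc01 j).1
          nlinarith
    _ ≤ (1 - Real.exp (-lam))/lam := by
        rw [Finset.sum_ite_eq' (range M) (u+1) (fun _ => (1 - Real.exp (-lam))/lam)]
        split <;> simp [hbd]


lemma vdm_range (a b k : ℕ) :
    ∑ j ∈ range (k+1), a.choose j * b.choose (k-j) = (a+b).choose k := by
  rw [Nat.add_choose_eq, Finset.Nat.sum_antidiagonal_eq_sum_range_succ_mk]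

lemma succ_mul_choose' {a k : ℕ} (ha : 1 ≤ a) (hk : 1 ≤ k) :
    a * (a-1).choose (k-1) = a.choose k * k := by
  obtain ⟨a', rfl⟩ : ∃ a', a = a' + 1 := ⟨a - 1, by omega⟩
  obtain ⟨k', rfl⟩ : ∃ k', k = k' + 1 := ⟨k - 1, by omega⟩
  simpa using Nat.add_one_mul_choose_eq a' k'

lemma mean_num (a b c : ℕ) :
    ∑ j ∈ range (c+2), j * ((a+1).choose j * b.choose (c+1-j))
      = (a+1) * (a+b).choose c := by
  rw [Finset.sum_range_succ' (fun j => j * ((a+1).choose j * b.choose (c+1-j))) (c+1)]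
  simp only [Nat.zero_eq, zero_mul, add_zero, Nat.mul_zero]
  have : ∀ k, (k+1) * ((a+1).choose (k+1) * b.choose (c+1-(k+1)))
      = (a+1) * (a.choose k * b.choose (c-k)) := by
    intro k
    have h := Nat.add_one_mul_choose_eq a k
    have h2 : c + 1 - (k+1) = c - k := by omega
    rw [h2]
    calc (k+1) * ((a+1).choose (k+1) * b.choose (c-k))
        = ((a+1).choose (k+1) * (k+1)) * b.choose (c-k) := by ring
      _ = ((a+1) * a.choose k) * b.choose (c-k) := by
          rw [← h]
      _ = (a+1) * (a.choose k * b.choose (c-k)) := by ring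
  calc ∑ k ∈ range (c+1), (k+1) * ((a+1).choose (k+1) * b.choose (c+1-(k+1))) + 0
      = ∑ k ∈ range (c+1), (a+1) * (a.choose k * b.choose (c-k)) := by
        rw [add_zero]; exact Finset.sum_congr rfl fun k _ => this k
    _ = (a+1) * ∑ k ∈ range (c+1), a.choose k * b.choose (c-k) := by rw [Finset.mul_sum]
    _ = (a+1) * (a+b).choose c := by rw [vdm_range]

noncomputable def hypP (n m₁ m₂ : ℕ) (j : ℕ) : ℝ :=
  if j ≤ m₂ then ((m₁.choose j * (n - m₁).choose (m₂ - j) : ℕ) : ℝ) / ((n.choose m₂ : ℕ) : ℝ)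
  else 0

noncomputable def hypQ (n m₁ m₂ : ℕ) (j : ℕ) : ℝ :=
  if j ≤ m₂-1 then
    (((m₁-1).choose j * (n - m₁).choose (m₂-1 - j) : ℕ) : ℝ) / (((n-1).choose (m₂-1) : ℕ) : ℝ)
  else 0

section hyps
variable {n m₁ m₂ : ℕ} (hm₁ : 0 < m₁) (hm₂ : 0 < m₂) (hsum : m₁ + m₂ ≤ n)

include hm₁ hm₂ hsum

lemma hypP_sum : ∑ j ∈ range (m₂+1), hypP n m₁ m₂ j = 1 := by
  have hC : 0 < n.choose m₂ := Nat.choose_pos (by omega)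
  have e1 : ∑ j ∈ range (m₂+1), hypP n m₁ m₂ j
      = ((∑ j ∈ range (m₂+1), m₁.choose j * (n-m₁).choose (m₂-j) : ℕ) : ℝ)
          / ((n.choose m₂ : ℕ) : ℝ) := by
    rw [Nat.cast_sum, Finset.sum_div]
    refine Finset.sum_congr rfl fun j hj => ?_
    rw [Finset.mem_range] at hj
    rw [hypP, if_pos (by omega)]
  rw [e1, vdm_range, show m₁ + (n - m₁) = n by omega, div_self (by exact_mod_cast hC.ne')]

lemma hypQ_sum : ∑ j ∈ range (m₂+1), hypQ n m₁ m₂ j = 1 := by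
  have hC : 0 < (n-1).choose (m₂-1) := Nat.choose_pos (by omega)
  rw [Finset.sum_range_succ, hypQ, if_neg (by omega), add_zero]
  have e1 : ∑ j ∈ range m₂, hypQ n m₁ m₂ j
      = ((∑ j ∈ range ((m₂-1)+1), (m₁-1).choose j * (n-m₁).choose ((m₂-1)-j) : ℕ) : ℝ)
          / (((n-1).choose (m₂-1) : ℕ) : ℝ) := by
    rw [Nat.cast_sum, Finset.sum_div, show m₂ = (m₂-1)+1 by omega]
    refine Finset.sum_congr rfl fun j hj => ?_
    rw [Finset.mem_range] at hj
    rw [hypQ, if_pos (by omega)]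
  rw [e1, vdm_range, show (m₁-1) + (n - m₁) = n-1 by omega,
    div_self (by exact_mod_cast hC.ne')]

lemma hyp_step : ∀ j : ℕ, (1 ≤ j) →
    (j : ℝ) * hypP n m₁ m₂ j = ((m₁ * m₂ : ℝ)/n) * hypQ n m₁ m₂ (j-1) := by
  intro j hj
  have hn : 0 < n := by omega
  have hC : 0 < n.choose m₂ := Nat.choose_pos (by omega)
  have hC' : 0 < (n-1).choose (m₂-1) := Nat.choose_pos (by omega)
  by_cases hjm : j ≤ m₂
  · rw [hypP, if_pos hjm, hypQ, if_pos (by omega)]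
    have id1 : m₁ * (m₁-1).choose (j-1) = m₁.choose j * j := succ_mul_choose' hm₁ hj
    have id2 : n * (n-1).choose (m₂-1) = n.choose m₂ * m₂ := succ_mul_choose' (by omega) hm₂
    have id3 : (m₂-1) - (j-1) = m₂ - j := by omega
    rw [id3]
    have key : (j * (m₁.choose j * (n-m₁).choose (m₂-j)) * (n * (n-1).choose (m₂-1)) : ℕ)
        = (m₁ * m₂ * ((m₁-1).choose (j-1) * (n-m₁).choose (m₂-j)) * n.choose m₂ : ℕ) := by
      calc j * (m₁.choose j * (n-m₁).choose (m₂-j)) * (n * (n-1).choose (m₂-1))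
          = (m₁.choose j * j) * (n * (n-1).choose (m₂-1)) * (n-m₁).choose (m₂-j) := by ring
        _ = (m₁ * (m₁-1).choose (j-1)) * (n.choose m₂ * m₂) * (n-m₁).choose (m₂-j) := by
            rw [id1, id2]
        _ = m₁ * m₂ * ((m₁-1).choose (j-1) * (n-m₁).choose (m₂-j)) * n.choose m₂ := by ring
    have keyR : (j : ℝ) * (m₁.choose j * (n-m₁).choose (m₂-j) : ℕ) * (n * (n-1).choose (m₂-1))
        = (m₁ * m₂ : ℝ) * ((m₁-1).choose (j-1) * (n-m₁).choose (m₂-j) : ℕ) * (n.choose m₂ : ℕ) := by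
      exact_mod_cast congrArg (fun x : ℕ => (x : ℝ)) key
    have hCn : ((n.choose m₂ : ℕ) : ℝ) ≠ 0 := by exact_mod_cast hC.ne'
    have hCn' : (((n-1).choose (m₂-1) : ℕ) : ℝ) ≠ 0 := by exact_mod_cast hC'.ne'
    have hnn : (n : ℝ) ≠ 0 := by exact_mod_cast hn.ne'
    field_simp
    push_cast at keyR ⊢
    nlinarith [keyR]
  · rw [hypP, if_neg hjm, hypQ, if_neg (by omega), mul_zero, mul_zero]

lemma hypP_mean :
    ∑ j ∈ range (m₂+1), (j : ℝ) * hypP n m₁ m₂ j = (m₁ * m₂ : ℝ)/n := by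
  have hn : 0 < n := by omega
  have hC : 0 < n.choose m₂ := Nat.choose_pos (by omega)
  have e1 : ∑ j ∈ range (m₂+1), (j : ℝ) * hypP n m₁ m₂ j
      = ((∑ j ∈ range (m₂+1), j * (m₁.choose j * (n-m₁).choose (m₂-j)) : ℕ) : ℝ)
          / ((n.choose m₂ : ℕ) : ℝ) := by
    rw [Nat.cast_sum, Finset.sum_div]
    refine Finset.sum_congr rfl fun j hj => ?_
    rw [Finset.mem_range] at hj
    rw [hypP, if_pos (by omega)]
    push_cast
    ring
  have e2 : (∑ j ∈ range (m₂+1), j * (m₁.choose j * (n-m₁).choose (m₂-j)) : ℕ)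
      = m₁ * (n-2+1).choose (m₂-1) := by
    have h := mean_num (m₁-1) (n-m₁) (m₂-1)
    rw [show (m₂-1)+2 = m₂+1 by omega, show (m₁-1)+1 = m₁ by omega] at h
    rw [show (m₁-1)+(n-m₁) = n-2+1 by omega] at h
    rw [← h]
    refine Finset.sum_congr rfl fun j hj => ?_
    rw [show (m₂-1)+1 = m₂ by omega]
  have id2 : n * (n-1).choose (m₂-1) = n.choose m₂ * m₂ := succ_mul_choose' (by omega) hm₂
  rw [e1, e2, show n-2+1 = n-1 by omega]
  have keyN : m₁ * ((n-1).choose (m₂-1)) * n = m₁ * m₂ * n.choose m₂ := by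
    calc m₁ * ((n-1).choose (m₂-1)) * n = m₁ * (n * (n-1).choose (m₂-1)) := by ring
      _ = m₁ * (n.choose m₂ * m₂) := by rw [id2]
      _ = m₁ * m₂ * n.choose m₂ := by ring
  rw [div_eq_div_iff (by exact_mod_cast hC.ne') (by exact_mod_cast (Nat.cast_pos (α := ℝ)).2 hn |>.ne')]
  exact_mod_cast congrArg (fun x : ℕ => (x : ℝ)) keyN

lemma hypQ_mean :
    ∑ j ∈ range (m₂+1), (j : ℝ) * hypQ n m₁ m₂ j
      = ((m₁:ℝ)-1) * ((m₂:ℝ)-1) / ((n:ℝ)-1) := by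
  have hn : 2 ≤ n := by omega
  have hC' : 0 < (n-1).choose (m₂-1) := Nat.choose_pos (by omega)
  rcases eq_or_lt_of_le (show 1 ≤ m₁ from hm₁) with h1 | h1
  · -- m₁ = 1
    have hm : m₁ = 1 := h1.symm
    subst hm
    have : ∀ j ∈ range (m₂+1), (j:ℝ) * hypQ n 1 m₂ j = 0 := by
      intro j hj
      rcases Nat.eq_zero_or_pos j with rfl | hjp
      · simp
      · rw [hypQ]
        rcases le_or_gt j (m₂-1) with h | h
        · rw [if_pos h]
          simp [Nat.choose_eq_zero_of_lt (show 1-1 < j by omega), Nat.choose_eq_zero_of_lt hjp]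
        · rw [if_neg (by omega), mul_zero]
    rw [Finset.sum_congr rfl this]
    simp
  rcases eq_or_lt_of_le (show 1 ≤ m₂ from hm₂) with h2 | h2
  · -- m₂ = 1
    have hm : m₂ = 1 := h2.symm
    subst hm
    have : ∀ j ∈ range 2, (j:ℝ) * hypQ n m₁ 1 j = 0 := by
      intro j hj
      rcases Nat.eq_zero_or_pos j with rfl | hjp
      · simp
      · rw [hypQ, if_neg (by omega), mul_zero]
    rw [Finset.sum_congr rfl this]
    simp
  -- now 2 ≤ m₁, 2 ≤ m₂
  have e1 : ∑ j ∈ range (m₂+1), (j : ℝ) * hypQ n m₁ m₂ j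
      = ((∑ j ∈ range m₂, j * ((m₁-1).choose j * (n-m₁).choose ((m₂-1)-j)) : ℕ) : ℝ)
          / (((n-1).choose (m₂-1) : ℕ) : ℝ) := by
    rw [Finset.sum_range_succ, hypQ, if_neg (by omega), mul_zero, add_zero]
    rw [Nat.cast_sum, Finset.sum_div]
    refine Finset.sum_congr rfl fun j hj => ?_
    rw [Finset.mem_range] at hj
    rw [hypQ, if_pos (by omega)]
    push_cast
    ring
  have e2 : (∑ j ∈ range m₂, j * ((m₁-1).choose j * (n-m₁).choose ((m₂-1)-j)) : ℕ)
      = (m₁-1) * (n-2).choose (m₂-2) := by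
    have h := mean_num (m₁-2) (n-m₁) (m₂-2)
    rw [show (m₂-2)+2 = m₂ by omega, show (m₁-2)+1 = m₁-1 by omega,
      show (m₁-2)+(n-m₁) = n-2 by omega] at h
    rw [← h]
    refine Finset.sum_congr rfl fun j hj => ?_
    rw [show (m₂-2)+1 = m₂-1 by omega]
  have id2 : (n-1) * (n-2).choose (m₂-2) = (n-1).choose (m₂-1) * (m₂-1) := by
    have := succ_mul_choose' (a := n-1) (k := m₂-1) (by omega) (by omega)
    rw [show n-1-1 = n-2 by omega, show m₂-1-1 = m₂-2 by omega] at this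
    exact this
  rw [e1, e2]
  have hne : ((n:ℝ)-1) ≠ 0 := by
    have : (2:ℝ) ≤ (n:ℝ) := by exact_mod_cast hn
    linarith
  rw [div_eq_div_iff (by exact_mod_cast hC'.ne') hne]
  have keyN : (m₁-1) * ((n-2).choose (m₂-2)) * (n-1) = ((m₁-1) * (m₂-1)) * (n-1).choose (m₂-1) := by
    calc (m₁-1) * ((n-2).choose (m₂-2)) * (n-1) = (m₁-1) * ((n-1) * (n-2).choose (m₂-2)) := by ring
      _ = (m₁-1) * ((n-1).choose (m₂-1) * (m₂-1)) := by rw [id2]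
      _ = ((m₁-1) * (m₂-1)) * (n-1).choose (m₂-1) := by ring
  have keyR := congrArg (fun x : ℕ => (x : ℝ)) keyN
  push_cast [Nat.cast_sub (show 1 ≤ m₁ by omega), Nat.cast_sub (show 1 ≤ m₂ by omega),
    Nat.cast_sub (show 1 ≤ n by omega)] at keyR
  push_cast [Nat.cast_sub (show 1 ≤ m₁ by omega), Nat.cast_sub (show 1 ≤ m₂ by omega),
    Nat.cast_sub (show 1 ≤ n by omega)]
  linarith [keyR]

lemma hypP_nonneg (j : ℕ) : 0 ≤ hypP n m₁ m₂ j := by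
  rw [hypP]; split
  · positivity
  · exact le_refl 0

lemma hypQ_nonneg (j : ℕ) : 0 ≤ hypQ n m₁ m₂ j := by
  rw [hypQ]; split
  · positivity
  · exact le_refl 0

lemma hypQ_zero {j : ℕ} (hj : min m₁ m₂ ≤ j) : hypQ n m₁ m₂ j = 0 := by
  rw [hypQ]
  rcases le_or_gt m₂ j with h | h
  · rw [if_neg (by omega)]
  · have hm : m₁ ≤ j := by omega
    rw [if_pos (by omega), Nat.choose_eq_zero_of_lt (show m₁-1 < j by omega)]
    simp

lemma hyp_crossing_step {j : ℕ} (hj : hypQ n m₁ m₂ j ≤ hypP n m₁ m₂ j) :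
    hypQ n m₁ m₂ (j+1) ≤ hypP n m₁ m₂ (j+1) := by
  rcases le_or_gt (min m₁ m₂) (j+1) with hs | hs
  · rw [hypQ_zero hm₁ hm₂ hsum hs]
    exact hypP_nonneg hm₁ hm₂ hsum (j+1)
  -- j+2 ≤ min m₁ m₂, so j+1 ≤ m₁-1 and j+1 ≤ m₂-1
  have hj1 : j+1 ≤ m₁-1 := by omega
  have hj2 : j+1 ≤ m₂-1 := by omega
  have hC : 0 < n.choose m₂ := Nat.choose_pos (by omega)
  have hC' : 0 < (n-1).choose (m₂-1) := Nat.choose_pos (by omega)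
  set B : ℕ := m₁.choose j * (n-m₁).choose (m₂-j) with hB
  set A : ℕ := m₁.choose (j+1) * (n-m₁).choose (m₂-(j+1)) with hA
  set B' : ℕ := (m₁-1).choose j * (n-m₁).choose (m₂-1-j) with hB'
  set A' : ℕ := (m₁-1).choose (j+1) * (n-m₁).choose (m₂-1-(j+1)) with hA'
  have hyp1 : (B' : ℝ) * (n.choose m₂ : ℕ) ≤ (B : ℝ) * ((n-1).choose (m₂-1) : ℕ) := by
    rw [hypQ, if_pos (by omega), hypP, if_pos (by omega)] at hj
    rw [div_le_div_iff₀ (by exact_mod_cast hC') (by exact_mod_cast hC)] at hj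
    exact_mod_cast hj
  have hBC : B' * n.choose m₂ ≤ B * (n-1).choose (m₂-1) := by exact_mod_cast hyp1
  -- ratio identities
  have idA : A * ((j+1) * (n-m₁-(m₂-(j+1)))) = B * ((m₁-j)*(m₂-j)) := by
    have i1 : m₁.choose (j+1) * (j+1) = m₁.choose j * (m₁-j) := Nat.choose_succ_right_eq m₁ j
    have i2 : (n-m₁).choose (m₂-j) * (m₂-j) = (n-m₁).choose (m₂-(j+1)) * ((n-m₁)-(m₂-(j+1))) := by
      have := Nat.choose_succ_right_eq (n-m₁) (m₂-(j+1))
      rw [show m₂-(j+1)+1 = m₂-j by omega] at this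
      exact this
    calc A * ((j+1) * (n-m₁-(m₂-(j+1))))
        = (m₁.choose (j+1) * (j+1)) * ((n-m₁).choose (m₂-(j+1)) * ((n-m₁)-(m₂-(j+1)))) := by
          rw [hA]; ring
      _ = (m₁.choose j * (m₁-j)) * ((n-m₁).choose (m₂-j) * (m₂-j)) := by rw [i1, ← i2]
      _ = B * ((m₁-j)*(m₂-j)) := by rw [hB]; ring
  have idA' : A' * ((j+1) * (n-m₁-(m₂-1-(j+1)))) = B' * ((m₁-1-j)*(m₂-1-j)) := by
    have i1 : (m₁-1).choose (j+1) * (j+1) = (m₁-1).choose j * (m₁-1-j) :=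
      Nat.choose_succ_right_eq (m₁-1) j
    have i2 : (n-m₁).choose (m₂-1-j) * (m₂-1-j)
        = (n-m₁).choose (m₂-1-(j+1)) * ((n-m₁)-(m₂-1-(j+1))) := by
      have := Nat.choose_succ_right_eq (n-m₁) (m₂-1-(j+1))
      rw [show m₂-1-(j+1)+1 = m₂-1-j by omega] at this
      exact this
    calc A' * ((j+1) * (n-m₁-(m₂-1-(j+1))))
        = ((m₁-1).choose (j+1) * (j+1)) * ((n-m₁).choose (m₂-1-(j+1)) * ((n-m₁)-(m₂-1-(j+1)))) := by
          rw [hA']; ring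
      _ = ((m₁-1).choose j * (m₁-1-j)) * ((n-m₁).choose (m₂-1-j) * (m₂-1-j)) := by rw [i1, ← i2]
      _ = B' * ((m₁-1-j)*(m₂-1-j)) := by rw [hB']; ring
  set D1 : ℕ := n-m₁-(m₂-(j+1)) with hD1
  set D2 : ℕ := n-m₁-(m₂-1-(j+1)) with hD2
  have hD1pos : 0 < D1 := by omega
  have hD12 : D1 ≤ D2 := by omega
  have hmm : (m₁-1-j)*(m₂-1-j) ≤ (m₁-j)*(m₂-j) := Nat.mul_le_mul (by omega) (by omega)
  -- key: A' * C ≤ A * C'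
  have key : A' * n.choose m₂ ≤ A * (n-1).choose (m₂-1) := by
    have hD2pos : 0 < D2 := by omega
    have hpos : 0 < (j+1) * D1 * ((j+1) * D2) :=
      Nat.mul_pos (Nat.mul_pos (by omega) hD1pos) (Nat.mul_pos (by omega) hD2pos)
    refine Nat.le_of_mul_le_mul_right ?_ hpos
    calc A' * n.choose m₂ * ((j+1) * D1 * ((j+1) * D2))
        = (A' * ((j+1) * D2)) * n.choose m₂ * ((j+1) * D1) := by ring
      _ = (B' * ((m₁-1-j)*(m₂-1-j))) * n.choose m₂ * ((j+1) * D1) := by rw [idA']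
      _ = (B' * n.choose m₂) * (((m₁-1-j)*(m₂-1-j)) * ((j+1) * D1)) := by ring
      _ ≤ (B * (n-1).choose (m₂-1)) * (((m₁-j)*(m₂-j)) * ((j+1) * D2)) := by
          refine Nat.mul_le_mul hBC (Nat.mul_le_mul hmm (Nat.mul_le_mul_left _ hD12))
      _ = (B * ((m₁-j)*(m₂-j))) * (n-1).choose (m₂-1) * ((j+1) * D2) := by ring
      _ = (A * ((j+1) * D1)) * (n-1).choose (m₂-1) * ((j+1) * D2) := by rw [idA]
      _ = A * (n-1).choose (m₂-1) * ((j+1) * D1 * ((j+1) * D2)) := by ring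
  rw [hypQ, if_pos (by omega), hypP, if_pos (by omega)]
  rw [div_le_div_iff₀ (by exact_mod_cast hC') (by exact_mod_cast hC)]
  exact_mod_cast key

lemma hyp_tail_nonneg {t : ℕ} (ht : t ≤ m₂+1) :
    0 ≤ ∑ k ∈ Finset.Ico t (m₂+1), (hypP n m₁ m₂ k - hypQ n m₁ m₂ k) := by
  have mono : ∀ a b : ℕ, a ≤ b → hypQ n m₁ m₂ a ≤ hypP n m₁ m₂ a →
      hypQ n m₁ m₂ b ≤ hypP n m₁ m₂ b := by
    intro a b hab h
    induction b with
    | zero => simpa [Nat.le_zero.1 hab] using h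
    | succ b ih =>
      rcases Nat.lt_or_ge a (b+1) with h' | h'
      · exact hyp_crossing_step hm₁ hm₂ hsum (ih (by omega))
      · have : a = b+1 := by omega
        subst this; exact h
  by_cases hP : hypQ n m₁ m₂ t ≤ hypP n m₁ m₂ t
  · refine Finset.sum_nonneg fun k hk => ?_
    rw [Finset.mem_Ico] at hk
    have := mono t k hk.1 hP
    linarith
  · have hneg : ∀ k < t, hypP n m₁ m₂ k < hypQ n m₁ m₂ k := by
      intro k hk
      by_contra hcon
      push_neg at hcon
      exact hP (mono k t (by omega) hcon)
    have split : ∑ k ∈ range t, (hypP n m₁ m₂ k - hypQ n m₁ m₂ k)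
        + ∑ k ∈ Finset.Ico t (m₂+1), (hypP n m₁ m₂ k - hypQ n m₁ m₂ k)
        = ∑ k ∈ range (m₂+1), (hypP n m₁ m₂ k - hypQ n m₁ m₂ k) := by
      rw [Finset.range_eq_Ico, Finset.range_eq_Ico]
      exact Finset.sum_Ico_consecutive _ (Nat.zero_le t) ht
    have total : ∑ k ∈ range (m₂+1), (hypP n m₁ m₂ k - hypQ n m₁ m₂ k) = 0 := by
      rw [Finset.sum_sub_distrib, hypP_sum hm₁ hm₂ hsum, hypQ_sum hm₁ hm₂ hsum]
      ring
    have neg : ∑ k ∈ range t, (hypP n m₁ m₂ k - hypQ n m₁ m₂ k) ≤ 0 := by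
      refine Finset.sum_nonpos fun k hk => ?_
      rw [Finset.mem_range] at hk
      linarith [hneg k hk]
    linarith

end hyps

lemma stg_zero {lam : ℝ} (hlam : lam ≠ 0) (P : ℝ) (c : ℕ → ℝ) :
    lam * stg lam P c 0 = c 0 - P := by
  rw [stg]
  simp
  field_simp

lemma stg_rec {lam : ℝ} (hlam : lam ≠ 0) (P : ℝ) (c : ℕ → ℝ) (k : ℕ) :
    lam * stg lam P c (k+1) = ((k:ℝ)+1) * stg lam P c k + (c (k+1) - P) := by
  rw [stg, stg, Finset.sum_range_succ]
  have hfk : ((k.factorial : ℝ)) ≠ 0 := by positivity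
  have hfk1 : (((k+1).factorial : ℝ)) ≠ 0 := by positivity
  have hl1 : lam ^ (k+1) ≠ 0 := pow_ne_zero _ hlam
  have hl2 : lam ^ (k+2) ≠ 0 := pow_ne_zero _ hlam
  rw [Nat.factorial_succ]
  push_cast
  field_simp
  ring

lemma abel_sum (d g : ℕ → ℝ) (M : ℕ) (h0 : ∑ k ∈ range M, d k = 0) :
    ∑ k ∈ range M, d k * g k
      = ∑ t ∈ Finset.Ico 1 M, (∑ k ∈ Finset.Ico t M, d k) * (g t - g (t-1)) := by
  rcases Nat.eq_zero_or_pos M with rfl | hM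
  · simp
  set D : ℕ → ℝ := fun t => ∑ k ∈ Finset.Ico t M, d k with hD
  have hd : ∀ k < M, d k = D k - D (k+1) := by
    intro k hk
    rw [hD]
    simp only []
    rw [Finset.sum_eq_sum_Ico_succ_bot hk]
    ring
  have e1 : ∑ k ∈ range M, d k * g k = ∑ k ∈ range M, (D k * g k - D (k+1) * g k) := by
    refine Finset.sum_congr rfl fun k hk => ?_
    rw [Finset.mem_range] at hk
    rw [hd k hk]; ring
  rw [e1, Finset.sum_sub_distrib]
  have e2 : ∑ k ∈ range M, D k * g k = D 0 * g 0 + ∑ k ∈ Finset.Ico 1 M, D k * g k := by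
    rw [Finset.range_eq_Ico, Finset.sum_eq_sum_Ico_succ_bot hM]
  have e3 : ∑ k ∈ range M, D (k+1) * g k = ∑ t ∈ Finset.Ico 1 M, D t * g (t-1) + D M * g (M-1) := by
    have r1 : ∑ k ∈ range M, D (k+1) * g k = ∑ t ∈ Finset.Ico 1 (M+1), D t * g (t-1) := by
      rw [Finset.sum_Ico_eq_sum_range]
      simp only [Nat.add_sub_cancel]
      refine Finset.sum_congr rfl fun k _ => ?_
      rw [Nat.add_comm 1 k, Nat.add_sub_cancel]
    rw [r1, Finset.sum_Ico_succ_top hM]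
  have hD0 : D 0 = 0 := by
    rw [hD]; simp only []; rw [← Finset.range_eq_Ico]; exact h0
  have hDM : D M = 0 := by rw [hD]; simp
  rw [e2, e3, hD0, hDM]
  simp only [zero_mul, add_zero, zero_add]
  rw [← Finset.sum_sub_distrib]
  exact Finset.sum_congr rfl fun t _ => by ring

lemma swap_sum (d : ℕ → ℝ) (M : ℕ) :
    ∑ t ∈ Finset.Ico 1 M, (∑ k ∈ Finset.Ico t M, d k) = ∑ k ∈ range M, (k:ℝ) * d k := by
  induction M with
  | zero => simp
  | succ M ih =>
    rcases Nat.eq_zero_or_pos M with rfl | hM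
    · simp
    have outer : ∑ t ∈ Finset.Ico 1 (M+1), (∑ k ∈ Finset.Ico t (M+1), d k)
        = ∑ t ∈ Finset.Ico 1 M, (∑ k ∈ Finset.Ico t (M+1), d k) + ∑ k ∈ Finset.Ico M (M+1), d k := by
      rw [Finset.sum_Ico_succ_top hM]
    have inner : ∀ t ∈ Finset.Ico 1 M, ∑ k ∈ Finset.Ico t (M+1), d k
        = (∑ k ∈ Finset.Ico t M, d k) + d M := by
      intro t ht
      rw [Finset.mem_Ico] at ht
      rw [Finset.sum_Ico_succ_top (by omega)]
    rw [outer, Finset.sum_congr rfl inner, Finset.sum_add_distrib, ih,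
      Finset.sum_const, Nat.card_Ico, Finset.sum_range_succ (fun k => (k:ℝ) * d k) M]
    have h1 : ∑ k ∈ Finset.Ico M (M+1), d k = d M := by simp
    have h2 : ((M - 1 : ℕ) : ℝ) = (M:ℝ) - 1 := by
      rw [Nat.cast_sub hM]
      norm_num
    rw [h1, nsmul_eq_mul, h2]
    ring

/-- Stein–Chen Poisson approximation of the hypergeometric distribution of the
intersection size of two independent uniform random subsets of `{1,…,n}` of
sizes `m₁` and `m₂`, with Poisson mean `e = m₁m₂/n`. -/
theorem stmt17 (n m₁ m₂ : ℕ) (hm₁ : 0 < m₁) (hm₂ : 0 < m₂) (hsum : m₁ + m₂ ≤ n) :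
    let e : ℝ := (m₁ * m₂ : ℝ) / n
    let hyp : ℕ → ℝ := fun j => if j ≤ m₂ then
      ((m₁.choose j * (n - m₁).choose (m₂ - j) : ℕ) : ℝ) / ((n.choose m₂ : ℕ) : ℝ) else 0
    let pois : ℕ → ℝ := fun j => Real.exp (-e) * e ^ j / (j.factorial : ℝ)
    (1 / 2) * (∑' j : ℕ, |hyp j - pois j|)
        ≤ (1 - Real.exp (-e)) * ((n : ℝ) / ((n : ℝ) - 1))
            * ((m₁ : ℝ) / n + (m₂ : ℝ) / n - (m₁ * m₂ : ℝ) / (n : ℝ)^2 - 1 / n) ∧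
    (1 - Real.exp (-e)) * ((n : ℝ) / ((n : ℝ) - 1))
        * ((m₁ : ℝ) / n + (m₂ : ℝ) / n - (m₁ * m₂ : ℝ) / (n : ℝ)^2 - 1 / n)
      ≤ ((m₁ : ℝ) + (m₂ : ℝ)) / n := by
  intro e hyp pois
  have hhyp : ∀ j, hyp j = hypP n m₁ m₂ j := fun j => rfl
  have hn2 : 2 ≤ n := by omega
  have hnR : (2:ℝ) ≤ (n:ℝ) := by exact_mod_cast hn2
  have hm₁R : (1:ℝ) ≤ (m₁:ℝ) := by exact_mod_cast hm₁
  have hm₂R : (1:ℝ) ≤ (m₂:ℝ) := by exact_mod_cast hm₂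
  have hmnR : (m₁:ℝ) + (m₂:ℝ) ≤ (n:ℝ) := by exact_mod_cast hsum
  have hnpos : (0:ℝ) < (n:ℝ) := by linarith
  have hn1pos : (0:ℝ) < (n:ℝ) - 1 := by linarith
  have hepos : (0:ℝ) < e :=
    div_pos (by exact_mod_cast Nat.mul_pos hm₁ hm₂) hnpos
  set mu : ℝ := ((m₁:ℝ)-1) * ((m₂:ℝ)-1) / ((n:ℝ)-1) with hmu
  set Q : ℝ := (m₁ : ℝ) / n + (m₂ : ℝ) / n - (m₁ * m₂ : ℝ) / (n : ℝ)^2 - 1 / n with hQ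
  have hemu : e - mu = ((n:ℝ) / ((n:ℝ) - 1)) * Q := by
    rw [hmu, hQ]
    have he' : e = (m₁ * m₂ : ℝ) / n := rfl
    rw [he']
    field_simp
    ring
  have hfac0 : 0 ≤ ((n:ℝ) / ((n:ℝ) - 1)) * Q := by
    rw [← hemu, hmu]
    rw [show e = (m₁ * m₂ : ℝ) / n from rfl, sub_nonneg, div_le_div_iff₀ hn1pos hnpos]
    nlinarith [mul_nonneg (sub_nonneg.2 hm₁R) (sub_nonneg.2 (by linarith : (m₂:ℝ) ≤ (n:ℝ))),
      mul_nonneg (by linarith : (0:ℝ) ≤ (m₂:ℝ) - 1) hnpos.le]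
  have hexp1 : Real.exp (-e) ≤ 1 := Real.exp_le_one_iff.2 (by linarith)
  have hexp0 : 0 < Real.exp (-e) := Real.exp_pos _
  -- Second inequality
  have part2 : (1 - Real.exp (-e)) * ((n : ℝ) / ((n : ℝ) - 1)) * Q ≤ ((m₁ : ℝ) + (m₂ : ℝ)) / n := by
    have hle : ((n:ℝ) / ((n:ℝ) - 1)) * Q ≤ ((m₁ : ℝ) + (m₂ : ℝ)) / n := by
      rw [← hemu, hmu, show e = (m₁ * m₂ : ℝ) / n from rfl]
      rw [div_sub_div _ _ hnpos.ne' hn1pos.ne', div_le_div_iff₀ (by positivity) hnpos]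
      nlinarith [mul_pos hnpos hn1pos, mul_nonneg (mul_nonneg (by linarith : (0:ℝ) ≤ (m₁:ℝ)) (by linarith : (0:ℝ) ≤ (m₂:ℝ))) hnpos.le]
    calc (1 - Real.exp (-e)) * ((n : ℝ) / ((n : ℝ) - 1)) * Q
        = (1 - Real.exp (-e)) * (((n : ℝ) / ((n : ℝ) - 1)) * Q) := by ring
      _ ≤ 1 * (((n : ℝ) / ((n : ℝ) - 1)) * Q) := by nlinarith
      _ ≤ ((m₁ : ℝ) + (m₂ : ℝ)) / n := by linarith
  refine ⟨?_, part2⟩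
  -- Part 1
  set M : ℕ := m₂ + 1 with hM
  have hyp0 : ∀ j, M ≤ j → hypP n m₁ m₂ j = 0 := by
    intro j hj
    rw [hypP, if_neg (by omega)]
  set c : ℕ → ℝ := fun j => if pois j ≤ hypP n m₁ m₂ j then 1 else 0 with hc
  have hc01 : ∀ j, 0 ≤ c j ∧ c j ≤ 1 := by
    intro j
    rw [hc]
    constructor <;> (simp only []; split <;> norm_num)
  have hpois_pos : ∀ j, 0 < pois j := by
    intro j
    show 0 < Real.exp (-e) * e ^ j / (j.factorial : ℝ)
    positivity
  have hc0 : ∀ j, M ≤ j → c j = 0 := by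
    intro j hj
    rw [hc]
    simp only []
    rw [hyp0 j hj, if_neg (not_le.2 (hpois_pos j))]
  set P : ℝ := ∑ j ∈ range M, c j * (Real.exp (-e) * e^j/(j.factorial : ℝ)) with hP
  set g : ℕ → ℝ := stg e P c with hg
  have hpoisP : ∑ j ∈ range M, c j * pois j = P := by
    rw [hP]
  -- LHS reduction
  have hsum_hyp : Summable (fun j => hypP n m₁ m₂ j) :=
    summable_of_ne_finset_zero (s := range M) fun j hj =>
      hyp0 j (by rw [Finset.mem_range, not_lt] at hj; exact hj)
  have hsum_pois : Summable pois := by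
    refine ((Real.summable_pow_div_factorial e).mul_left (Real.exp (-e))).congr fun j => ?_
    show Real.exp (-e) * (e^j / (j.factorial:ℝ)) = pois j
    rw [show pois j = Real.exp (-e) * e ^ j / (j.factorial : ℝ) from rfl]
    ring
  have tsum_pois_eq : ∑' j, pois j = 1 := by
    calc ∑' j, pois j = ∑' j, Real.exp (-e) * (e^j/(j.factorial:ℝ)) :=
          tsum_congr fun j => by
            rw [show pois j = Real.exp (-e) * e ^ j / (j.factorial : ℝ) from rfl]; ring
      _ = Real.exp (-e) * ∑' j, (e^j/(j.factorial:ℝ)) := tsum_mul_left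
      _ = Real.exp (-e) * Real.exp e := by rw [← exp_tsum]
      _ = 1 := by rw [← Real.exp_add]; simp
  have tsum_hyp_eq : ∑' j, hypP n m₁ m₂ j = 1 := by
    rw [tsum_eq_sum (s := range M)
      (fun j hj => hyp0 j (by rw [Finset.mem_range, not_lt] at hj; exact hj))]
    exact hypP_sum hm₁ hm₂ hsum
  have hsum_c : Summable (fun j => c j * (hypP n m₁ m₂ j - pois j)) :=
    summable_of_ne_finset_zero (s := range M) fun j hj => by
      rw [hc0 j (by rw [Finset.mem_range, not_lt] at hj; exact hj), zero_mul]
  have habs : ∀ j, |hypP n m₁ m₂ j - pois j|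
      = 2 * (c j * (hypP n m₁ m₂ j - pois j)) - (hypP n m₁ m₂ j - pois j) := by
    intro j
    rw [hc]
    simp only []
    split
    · rename_i h
      rw [abs_of_nonneg (by linarith)]
      ring
    · rename_i h
      push_neg at h
      rw [abs_of_neg (by linarith)]
      ring
  have key0 : (1/2 : ℝ) * (∑' j, |hyp j - pois j|)
      = ∑ j ∈ range M, c j * (hypP n m₁ m₂ j - pois j) := by
    have h1 : ∑' j, |hyp j - pois j|
        = ∑' j, (2 * (c j * (hypP n m₁ m₂ j - pois j)) - (hypP n m₁ m₂ j - pois j)) :=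
      tsum_congr fun j => by rw [hhyp j, habs j]
    have h2 : ∑' j, (2 * (c j * (hypP n m₁ m₂ j - pois j)) - (hypP n m₁ m₂ j - pois j))
        = 2 * (∑ j ∈ range M, c j * (hypP n m₁ m₂ j - pois j)) - 0 := by
      rw [Summable.tsum_sub ((hsum_c.mul_left 2)) (hsum_hyp.sub hsum_pois)]
      congr 1
      · rw [tsum_mul_left, tsum_eq_sum (s := range M) (fun j hj => by
          rw [hc0 j (by rw [Finset.mem_range, not_lt] at hj; exact hj), zero_mul])]
      · rw [Summable.tsum_sub hsum_hyp hsum_pois, tsum_hyp_eq, tsum_pois_eq, sub_self]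
    rw [h1, h2]
    ring
  have key1 : ∑ j ∈ range M, c j * (hypP n m₁ m₂ j - pois j)
      = ∑ j ∈ range M, hypP n m₁ m₂ j * (c j - P) := by
    rw [show (fun j => c j * (hypP n m₁ m₂ j - pois j))
      = fun j => (c j * hypP n m₁ m₂ j - c j * pois j) from funext fun j => by ring]
    rw [Finset.sum_sub_distrib, hpoisP]
    rw [show (fun j => hypP n m₁ m₂ j * (c j - P))
      = fun j => (c j * hypP n m₁ m₂ j - P * hypP n m₁ m₂ j) from funext fun j => by ring]
    rw [Finset.sum_sub_distrib, ← Finset.mul_sum, hypP_sum hm₁ hm₂ hsum, mul_one]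
  -- Stein telescope
  have stepA : ∀ j ∈ range M, hypP n m₁ m₂ j * (c j - P)
      = e * (hypP n m₁ m₂ j * g j)
        - (j:ℝ) * hypP n m₁ m₂ j * (if j = 0 then 0 else g (j-1)) := by
    intro j _
    cases j with
    | zero =>
      rw [if_pos rfl, hg]
      have h0 := stg_zero hepos.ne' P c
      simp only [Nat.cast_zero, zero_mul, mul_zero, sub_zero]
      rw [show c 0 - P = e * stg e P c 0 from (h0).symm]
      ring
    | succ k =>
      rw [if_neg (by omega), hg]
      have hr := stg_rec hepos.ne' P c k
      have : c (k+1) - P = e * stg e P c (k+1) - ((k:ℝ)+1) * stg e P c k := by linarith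
      rw [this]
      have hj1 : ((k+1 : ℕ):ℝ) = (k:ℝ)+1 := by push_cast; ring
      rw [show (k+1) - 1 = k from rfl, hj1]
      ring
  have stepB : ∀ j ∈ range M, (j:ℝ) * hypP n m₁ m₂ j * (if j = 0 then 0 else g (j-1))
      = e * (if j = 0 then 0 else hypQ n m₁ m₂ (j-1) * g (j-1)) := by
    intro j _
    cases j with
    | zero => simp
    | succ k =>
      rw [if_neg (by omega), if_neg (by omega)]
      have := hyp_step hm₁ hm₂ hsum (k+1) (by omega)
      rw [show ((k+1 : ℕ):ℝ) * hypP n m₁ m₂ (k+1) * g ((k+1)-1)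
        = (((k+1 : ℕ)):ℝ) * hypP n m₁ m₂ (k+1) * g k from rfl]
      rw [this]
      rw [show (k+1) - 1 = k from rfl]
      ring
  have key2 : ∑ j ∈ range M, hypP n m₁ m₂ j * (c j - P)
      = e * ∑ k ∈ range M, (hypP n m₁ m₂ k - hypQ n m₁ m₂ k) * g k := by
    rw [Finset.sum_congr rfl stepA, Finset.sum_sub_distrib]
    rw [Finset.sum_congr rfl stepB]
    rw [← Finset.mul_sum, ← Finset.mul_sum]
    have e3 : ∑ j ∈ range M, (if j = 0 then 0 else hypQ n m₁ m₂ (j-1) * g (j-1))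
        = ∑ k ∈ range m₂, hypQ n m₁ m₂ k * g k := by
      rw [hM, Finset.sum_range_succ']
      simp
    have e4 : ∑ k ∈ range m₂, hypQ n m₁ m₂ k * g k
        = ∑ k ∈ range M, hypQ n m₁ m₂ k * g k := by
      rw [hM, Finset.sum_range_succ, hypQ_zero hm₁ hm₂ hsum (by omega), zero_mul, add_zero]
    rw [e3, e4, ← mul_sub, ← Finset.sum_sub_distrib]
    congr 1
    exact Finset.sum_congr rfl fun k _ => by ring
  -- Abel + bounds
  have habel : ∑ k ∈ range M, (hypP n m₁ m₂ k - hypQ n m₁ m₂ k) * g k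
      = ∑ t ∈ Finset.Ico 1 M, (∑ k ∈ Finset.Ico t M, (hypP n m₁ m₂ k - hypQ n m₁ m₂ k))
          * (g t - g (t-1)) := by
    refine abel_sum _ _ M ?_
    rw [Finset.sum_sub_distrib, hypP_sum hm₁ hm₂ hsum, hypQ_sum hm₁ hm₂ hsum, sub_self]
  have hbound : ∑ t ∈ Finset.Ico 1 M, (∑ k ∈ Finset.Ico t M, (hypP n m₁ m₂ k - hypQ n m₁ m₂ k))
          * (g t - g (t-1))
      ≤ ((1 - Real.exp (-e))/e) * ∑ t ∈ Finset.Ico 1 M,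
          (∑ k ∈ Finset.Ico t M, (hypP n m₁ m₂ k - hypQ n m₁ m₂ k)) := by
    rw [Finset.mul_sum]
    refine Finset.sum_le_sum fun t ht => ?_
    rw [Finset.mem_Ico] at ht
    have hD : 0 ≤ ∑ k ∈ Finset.Ico t M, (hypP n m₁ m₂ k - hypQ n m₁ m₂ k) :=
      hyp_tail_nonneg hm₁ hm₂ hsum (by omega)
    have hdg : g t - g (t-1) ≤ (1 - Real.exp (-e))/e := by
      have h := stg_diff_le hepos hc0 hc01 (t-1)
      rw [show (t-1)+1 = t by omega] at h
      rw [← hP] at h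
      exact h
    calc (∑ k ∈ Finset.Ico t M, (hypP n m₁ m₂ k - hypQ n m₁ m₂ k)) * (g t - g (t-1))
        ≤ (∑ k ∈ Finset.Ico t M, (hypP n m₁ m₂ k - hypQ n m₁ m₂ k)) * ((1 - Real.exp (-e))/e) :=
          mul_le_mul_of_nonneg_left hdg hD
      _ = (1 - Real.exp (-e))/e * (∑ k ∈ Finset.Ico t M, (hypP n m₁ m₂ k - hypQ n m₁ m₂ k)) := by
          ring
  have hswap : ∑ t ∈ Finset.Ico 1 M, (∑ k ∈ Finset.Ico t M, (hypP n m₁ m₂ k - hypQ n m₁ m₂ k))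
      = e - mu := by
    rw [swap_sum]
    rw [show (fun k : ℕ => (k:ℝ) * (hypP n m₁ m₂ k - hypQ n m₁ m₂ k))
      = fun k : ℕ => ((k:ℝ) * hypP n m₁ m₂ k - (k:ℝ) * hypQ n m₁ m₂ k) from funext fun k => by ring]
    rw [Finset.sum_sub_distrib, hypP_mean hm₁ hm₂ hsum, hypQ_mean hm₁ hm₂ hsum]
  -- combine
  rw [key0, key1, key2, habel]
  calc e * ∑ t ∈ Finset.Ico 1 M, (∑ k ∈ Finset.Ico t M, (hypP n m₁ m₂ k - hypQ n m₁ m₂ k))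
          * (g t - g (t-1))
      ≤ e * (((1 - Real.exp (-e))/e) * ∑ t ∈ Finset.Ico 1 M,
          (∑ k ∈ Finset.Ico t M, (hypP n m₁ m₂ k - hypQ n m₁ m₂ k))) :=
        mul_le_mul_of_nonneg_left hbound hepos.le
    _ = (1 - Real.exp (-e)) * (e - mu) := by
        rw [hswap]
        field_simp
    _ = (1 - Real.exp (-e)) * ((n : ℝ) / ((n : ℝ) - 1)) * Q := by
        rw [hemu]; ring
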